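/- Let λ > μ > 0 and let ŝ satisfy 0 < ŝ < s*(λ,μ). Set z̃ := (λ+μ−2ŝ)/√((λ+μ−2ŝ)² − 4λμ) and H_B(z) := sup{ sz − Λ(s;λ,μ) : s ≤ ŝ }. Then: H_B(z) = +∞ for z < 1 (the set is not bounded above); H_B(z) = (1/2)·(√((z−1)λ) − √((z+1)μ))² for 1 ≤ z ≤ z̃; and H_B(z) = ŝ·z − Λ(ŝ;λ,μ) for z > z̃. Moreover, for every z ∈ ℝ, sup{ sz − Λ(s;λ,μ) : s < ŝ } = sup{ sz − Λ(s;λ,μ) : s ≤ ŝ }. -/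

import Mathlib

open MeasureTheory Filter

/-- `s*(λ,μ) = (√λ − √μ)²/2`. -/
noncomputable def sStar (l m : ℝ) : ℝ := (Real.sqrt l - Real.sqrt m) ^ 2 / 2

/-- `Λ(s;λ,μ)`. -/
noncomputable def Lam (s l m : ℝ) : ℝ :=
  (l - m - Real.sqrt ((l + m - 2 * s) ^ 2 - 4 * l * m)) / 2

private lemma le_of_sq_le_sq' {a b : ℝ} (ha : 0 ≤ a) (hb : 0 ≤ b) (h : a^2 ≤ b^2) : a ≤ b := by
  nlinarith

private lemma sqrtprod (l m z : ℝ) (hl : 0 ≤ l) (hm : 0 ≤ m) (hz : 1 ≤ z) :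
    Real.sqrt ((z-1)*l) * Real.sqrt ((z+1)*m) = Real.sqrt (z^2-1) * Real.sqrt (l*m) := by
  rw [← Real.sqrt_mul (by nlinarith : (0:ℝ) ≤ (z-1)*l),
      ← Real.sqrt_mul (by nlinarith : (0:ℝ) ≤ z^2-1)]
  congr 1; ring

private lemma key1 (l m s z : ℝ) (hl : 0 < l) (hm : 0 < m) (hz : 1 ≤ z)
    (h2E : 2*Real.sqrt (l*m) < l+m-2*s) :
    s*z - Lam s l m ≤ 1/2*(Real.sqrt ((z-1)*l) - Real.sqrt ((z+1)*m))^2 := by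
  set E := Real.sqrt (l*m) with hEdef
  have hE2 : E^2 = l*m := Real.sq_sqrt (by positivity)
  have hE0 : 0 < E := Real.sqrt_pos.mpr (by positivity)
  set u := l + m - 2*s with hudef
  have hu0 : 0 < u := by nlinarith
  have hD : 0 < u^2 - 4*l*m := by nlinarith
  set A := Real.sqrt (u^2 - 4*l*m) with hAdef
  have hA2 : A^2 = u^2 - 4*l*m := Real.sq_sqrt hD.le
  have hA0 : 0 ≤ A := Real.sqrt_nonneg _
  set C := Real.sqrt (z^2-1) with hCdef
  have hC2 : C^2 = z^2-1 := Real.sq_sqrt (by nlinarith)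
  have hC0 : 0 ≤ C := Real.sqrt_nonneg _
  have hzC : C ≤ z := le_of_sq_le_sq' hC0 (by linarith) (by nlinarith)
  have hR0 : 0 ≤ z*u - 2*C*E := by nlinarith
  have hkey : A ≤ z*u - 2*C*E := by
    apply le_of_sq_le_sq' hA0 hR0
    nlinarith [sq_nonneg (C*u - 2*z*E)]
  have h1 : Real.sqrt ((z-1)*l) ^ 2 = (z-1)*l := Real.sq_sqrt (by nlinarith)
  have h2 : Real.sqrt ((z+1)*m) ^ 2 = (z+1)*m := Real.sq_sqrt (by nlinarith)
  have h3 : Real.sqrt ((z-1)*l) * Real.sqrt ((z+1)*m) = C * E := sqrtprod l m z hl.le hm.le hz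
  have hexp : (Real.sqrt ((z-1)*l) - Real.sqrt ((z+1)*m))^2 = (z-1)*l + (z+1)*m - 2*(C*E) := by
    linear_combination h1 + h2 - 2*h3
  have hLam : Lam s l m = (l - m - A)/2 := rfl
  rw [hLam, hexp]
  have hzu : z*u = z*l + z*m - 2*(s*z) := by rw [hudef]; ring
  linarith

private lemma key3 (l m s shat z : ℝ) (hl : 0 < l) (hm : 0 < m) (hs : s ≤ shat)
    (h2E : 2*Real.sqrt (l*m) < l+m-2*shat)
    (hzW : l+m-2*shat ≤ z * Real.sqrt ((l+m-2*shat)^2-4*l*m)) :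
    s*z - Lam s l m ≤ shat*z - Lam shat l m := by
  set E := Real.sqrt (l*m) with hEdef
  have hE2 : E^2 = l*m := Real.sq_sqrt (by positivity)
  have hE0 : 0 < E := Real.sqrt_pos.mpr (by positivity)
  set uh := l + m - 2*shat with huhdef
  set u := l + m - 2*s with hudef
  have huh0 : 0 < uh := by nlinarith
  have huuh : uh ≤ u := by rw [hudef, huhdef]; linarith
  have hu0 : 0 < u := lt_of_lt_of_le huh0 huuh
  have hDh : 0 < uh^2 - 4*l*m := by nlinarith
  have hD : 0 < u^2 - 4*l*m := by nlinarith
  set W := Real.sqrt (uh^2 - 4*l*m) with hWdef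
  set A := Real.sqrt (u^2 - 4*l*m) with hAdef
  have hW2 : W^2 = uh^2 - 4*l*m := Real.sq_sqrt hDh.le
  have hA2 : A^2 = u^2 - 4*l*m := Real.sq_sqrt hD.le
  have hW0 : 0 < W := Real.sqrt_pos.mpr hDh
  have hA0 : 0 ≤ A := Real.sqrt_nonneg _
  have hAW : A*W ≤ uh*u - 4*l*m := by
    apply le_of_sq_le_sq' (by positivity) (by nlinarith)
    nlinarith [sq_nonneg (u - uh), mul_pos hl hm]
  have hLs : Lam s l m = (l - m - A)/2 := rfl
  have hLsh : Lam shat l m = (l - m - W)/2 := rfl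
  rw [hLs, hLsh]
  have hss : 0 ≤ shat - s := by linarith
  have h1 : (shat - s) * uh ≤ (shat - s) * (z*W) :=
    mul_le_mul_of_nonneg_left hzW hss
  have huuh2 : u - uh = 2*(shat - s) := by rw [hudef, huhdef]; ring
  nlinarith [hW0, mul_pos hW0 hW0]

private lemma key4 (l m s shat z : ℝ) (hl : 0 < l) (hm : 0 < m) (hs : s ≤ shat)
    (h2E : 2*Real.sqrt (l*m) < l+m-2*shat) :
    shat*z - Lam shat l m - (s*z - Lam s l m) ≤ (shat-s)*(|z|+1) := by
  set uh := l + m - 2*shat with huhdef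
  set u := l + m - 2*s with hudef
  have hE2 : Real.sqrt (l*m)^2 = l*m := Real.sq_sqrt (by positivity)
  have hE0 : 0 < Real.sqrt (l*m) := Real.sqrt_pos.mpr (by positivity)
  have huh0 : 0 < uh := by nlinarith
  have huuh : uh ≤ u := by rw [hudef, huhdef]; linarith
  have hWA : Real.sqrt (uh^2 - 4*l*m) ≤ Real.sqrt (u^2 - 4*l*m) :=
    Real.sqrt_le_sqrt (by nlinarith)
  have hLs : Lam s l m = (l - m - Real.sqrt (u^2-4*l*m))/2 := rfl
  have hLsh : Lam shat l m = (l - m - Real.sqrt (uh^2-4*l*m))/2 := rfl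
  rw [hLs, hLsh]
  have hz : z ≤ |z| := le_abs_self z
  have hss : 0 ≤ shat - s := by linarith
  nlinarith [mul_le_mul_of_nonneg_left hz hss]

private lemma low1 (l m s : ℝ) (hl : 0 < l) (hm : 0 < m)
    (h2E : 2*Real.sqrt (l*m) < l+m-2*s) :
    Lam s l m ≤ s - m + Real.sqrt (l*m) := by
  set E := Real.sqrt (l*m) with hEdef
  have hE2 : E^2 = l*m := Real.sq_sqrt (by positivity)
  have hE0 : 0 < E := Real.sqrt_pos.mpr (by positivity)
  set u := l + m - 2*s with hudef
  have hA : u - 2*E ≤ Real.sqrt (u^2 - 4*l*m) :=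
    Real.le_sqrt_of_sq_le (by nlinarith)
  have hLs : Lam s l m = (l - m - Real.sqrt (u^2-4*l*m))/2 := rfl
  rw [hLs]
  have : u = l + m - 2*s := hudef
  linarith

private lemma low2 (l m s : ℝ) (hl : 0 < l) (hm : 0 < m)
    (h2E : 2*Real.sqrt (l*m) < l+m-2*s) :
    m - 2*l*m/(l+m-2*s) ≤ s - Lam s l m := by
  have hE2 : Real.sqrt (l*m)^2 = l*m := Real.sq_sqrt (by positivity)
  have hE0 : 0 < Real.sqrt (l*m) := Real.sqrt_pos.mpr (by positivity)
  set u := l + m - 2*s with hudef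
  have hu0 : 0 < u := by nlinarith
  have hD : 0 < u^2 - 4*l*m := by nlinarith
  have hA : u - 4*l*m/u ≤ Real.sqrt (u^2 - 4*l*m) := by
    apply Real.le_sqrt_of_sq_le
    have h : (u - 4*l*m/u)^2 = (u^2-4*l*m)^2/u^2 := by field_simp
    rw [h, div_le_iff₀ (by positivity)]
    nlinarith [mul_pos hl hm]
  have hLs : Lam s l m = (l - m - Real.sqrt (u^2-4*l*m))/2 := rfl
  rw [hLs]
  have h48 : 4*l*m/u = 2*(2*l*m/u) := by ring
  linarith

set_option maxHeartbeats 1000000 in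
private lemma attain (l m shat z : ℝ) (hl : 0 < l) (hm : 0 < m)
    (h2E : 2*Real.sqrt (l*m) < l+m-2*shat) (hz1 : 1 < z)
    (hzW : z * Real.sqrt ((l+m-2*shat)^2-4*l*m) ≤ l+m-2*shat) :
    ∃ s ≤ shat, s*z - Lam s l m
      = 1/2*(Real.sqrt ((z-1)*l) - Real.sqrt ((z+1)*m))^2 := by
  set E := Real.sqrt (l*m) with hEdef
  have hE2 : E^2 = l*m := Real.sq_sqrt (by positivity)
  have hE0 : 0 < E := Real.sqrt_pos.mpr (by positivity)
  set C := Real.sqrt (z^2-1) with hCdef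
  have hC2 : C^2 = z^2-1 := Real.sq_sqrt (by nlinarith)
  have hC0 : 0 < C := Real.sqrt_pos.mpr (by nlinarith)
  set uh := l + m - 2*shat with huhdef
  have huh0 : 0 < uh := by nlinarith
  have hDh : 0 < uh^2 - 4*l*m := by nlinarith
  set W := Real.sqrt (uh^2 - 4*l*m) with hWdef
  have hW2 : W^2 = uh^2 - 4*l*m := Real.sq_sqrt hDh.le
  have hW0 : 0 < W := Real.sqrt_pos.mpr hDh
  set s0 := (l+m)/2 - z*E/C with hs0def
  have hu0eq : l+m-2*s0 = 2*(z*E/C) := by rw [hs0def]; ring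
  have hD0 : (l+m-2*s0)^2 - 4*l*m = (2*E/C)^2 := by
    rw [hu0eq]; field_simp
    nlinarith [hE2, hC2]
  have hsq : Real.sqrt ((l+m-2*s0)^2 - 4*l*m) = 2*E/C := by
    rw [hD0]; exact Real.sqrt_sq (by positivity)
  have huhC : uh * C ≤ 2*(z*E) := by
    apply le_of_sq_le_sq' (by positivity) (by positivity)
    have hzW2 : (z*W)^2 ≤ uh^2 := by
      apply sq_le_sq' (by nlinarith [mul_pos (lt_trans one_pos hz1) hW0]) hzW
    nlinarith [hW2, hC2, hE2]
  have hs0le : s0 ≤ shat := by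
    have h3 : uh ≤ z*E/C*2 := by
      rw [div_mul_eq_mul_div, le_div_iff₀ hC0]; linarith
    rw [hs0def, huhdef] at *; linarith
  refine ⟨s0, hs0le, ?_⟩
  have hLs : Lam s0 l m = (l - m - Real.sqrt ((l+m-2*s0)^2-4*l*m))/2 := rfl
  rw [hLs, hsq]
  have h1 : Real.sqrt ((z-1)*l) ^ 2 = (z-1)*l := Real.sq_sqrt (by nlinarith)
  have h2 : Real.sqrt ((z+1)*m) ^ 2 = (z+1)*m := Real.sq_sqrt (by nlinarith)
  have h3 : Real.sqrt ((z-1)*l) * Real.sqrt ((z+1)*m) = C * E :=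
    sqrtprod l m z hl.le hm.le hz1.le
  have hexp : (Real.sqrt ((z-1)*l) - Real.sqrt ((z+1)*m))^2
      = (z-1)*l + (z+1)*m - 2*(C*E) := by linear_combination h1 + h2 - 2*h3
  rw [hexp, hs0def]
  field_simp
  linear_combination 2*E*hC2

/-- for `0 < ŝ < s*(λ,μ)` and `z̃ = (λ+μ−2ŝ)/√((λ+μ−2ŝ)²−4λμ)`, the restricted
Legendre transform `H_B(z) = sup{sz − Λ(s;λ,μ) : s ≤ ŝ}` equals `+∞` for `z < 1` (and the set is
unbounded above), equals `(1/2)(√((z−1)λ) − √((z+1)μ))²` for `1 ≤ z ≤ z̃`, and equals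
`ŝz − Λ(ŝ;λ,μ)` for `z > z̃`; moreover the sup over `s < ŝ` coincides with the sup over
`s ≤ ŝ` (suprema taken in `EReal`). -/
theorem legendre_transform_Lam_truncated (l m : ℝ) (hlm : m < l) (hm : 0 < m)
    (shat : ℝ) (hshat0 : 0 < shat) (hshat1 : shat < sStar l m)
    (ztil : ℝ)
    (hztil : ztil = (l + m - 2 * shat) / Real.sqrt ((l + m - 2 * shat) ^ 2 - 4 * l * m)) :
    (∀ z : ℝ, z < 1 →
      (⨆ s : {s : ℝ // s ≤ shat}, ((s.1 * z - Lam s.1 l m : ℝ) : EReal)) = ⊤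
        ∧ ¬ BddAbove {y : ℝ | ∃ s ≤ shat, y = s * z - Lam s l m})
    ∧ (∀ z : ℝ, 1 ≤ z → z ≤ ztil →
      (⨆ s : {s : ℝ // s ≤ shat}, ((s.1 * z - Lam s.1 l m : ℝ) : EReal))
        = ((1 / 2 * (Real.sqrt ((z - 1) * l) - Real.sqrt ((z + 1) * m)) ^ 2 : ℝ) : EReal))
    ∧ (∀ z : ℝ, ztil < z →
      (⨆ s : {s : ℝ // s ≤ shat}, ((s.1 * z - Lam s.1 l m : ℝ) : EReal))
        = ((shat * z - Lam shat l m : ℝ) : EReal))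
    ∧ (∀ z : ℝ,
      (⨆ s : {s : ℝ // s < shat}, ((s.1 * z - Lam s.1 l m : ℝ) : EReal))
        = ⨆ s : {s : ℝ // s ≤ shat}, ((s.1 * z - Lam s.1 l m : ℝ) : EReal)) := by
  have hl : 0 < l := hm.trans hlm
  have h2E : 2*Real.sqrt (l*m) < l + m - 2*shat := by
    have h2 : Real.sqrt l ^ 2 = l := Real.sq_sqrt hl.le
    have h3 : Real.sqrt m ^ 2 = m := Real.sq_sqrt hm.le
    have h4 : Real.sqrt l * Real.sqrt m = Real.sqrt (l*m) := (Real.sqrt_mul hl.le m).symm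
    unfold sStar at hshat1
    nlinarith
  have hE0 : 0 < Real.sqrt (l*m) := Real.sqrt_pos.mpr (by positivity)
  have hE2 : Real.sqrt (l*m)^2 = l*m := Real.sq_sqrt (by positivity)
  have huh0 : 0 < l + m - 2*shat := by nlinarith
  have hDh : 0 < (l + m - 2*shat)^2 - 4*l*m := by nlinarith
  have hW0 : 0 < Real.sqrt ((l + m - 2*shat)^2 - 4*l*m) := Real.sqrt_pos.mpr hDh
  have h2Es : ∀ s ≤ shat, 2*Real.sqrt (l*m) < l + m - 2*s := fun s hs => by linarith
  -- unboundedness for z < 1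
  have hunb : ∀ z : ℝ, z < 1 → ∀ b : ℝ, ∃ s ≤ shat, b < s*z - Lam s l m := by
    intro z hz b
    set K := b - shat*(z-1) - m + Real.sqrt (l*m) with hK
    have h1z : 0 < 1 - z := by linarith
    set t := (|K|+1)/(1-z) with ht
    have ht0 : 0 ≤ t := by positivity
    refine ⟨shat - t, by linarith, ?_⟩
    have hlow := low1 l m (shat - t) hl hm (h2Es (shat - t) (by linarith))
    have htz : t*(1-z) = |K|+1 := by rw [ht]; field_simp
    have hKle : K ≤ |K| := le_abs_self K
    nlinarith
  refine ⟨?_, ?_, ?_, ?_⟩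
  · -- Part 1
    intro z hz
    constructor
    · rw [iSup_eq_top]
      intro b hb
      obtain ⟨r, hbr, _⟩ := EReal.exists_between_coe_real hb
      obtain ⟨s, hs, hgs⟩ := hunb z hz r
      exact ⟨⟨s, hs⟩, lt_trans hbr (EReal.coe_lt_coe_iff.mpr hgs)⟩
    · rintro ⟨b, hb⟩
      obtain ⟨s, hs, hgs⟩ := hunb z hz b
      exact absurd (hb ⟨s, hs, rfl⟩) (not_le.mpr hgs)
  · -- Part 2
    intro z hz1 hz2
    rcases eq_or_lt_of_le hz1 with h1 | h1
    · -- z = 1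
      subst h1
      have hsq2 : Real.sqrt (((1:ℝ)+1)*m)^2 = (1+1)*m := Real.sq_sqrt (by linarith)
      have hval : 1/2*(Real.sqrt (((1:ℝ)-1)*l) - Real.sqrt (((1:ℝ)+1)*m))^2 = m := by
        rw [show ((1:ℝ)-1)*l = 0 by ring, Real.sqrt_zero]
        linear_combination 1/2*hsq2
      apply le_antisymm
      · exact iSup_le fun p => EReal.coe_le_coe_iff.mpr
          (key1 l m p.1 1 hl hm le_rfl (h2Es p.1 p.2))
      · apply le_of_forall_lt
        intro c hc
        rw [hval] at hc
        obtain ⟨r, hcr, hrm⟩ := EReal.exists_between_coe_real hc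
        have hrm' : r < m := EReal.coe_lt_coe_iff.mp hrm
        set t := 2*l*m/(m-r) with htdef
        have ht0 : 0 < t := div_pos (by positivity) (by linarith)
        have hs : shat - t ≤ shat := by linarith
        have hu : l + m - 2*(shat - t) = (l + m - 2*shat) + 2*t := by ring
        have hlow := low2 l m (shat - t) hl hm (h2Es (shat - t) hs)
        have hdiv : 2*l*m/(l+m-2*(shat-t)) ≤ 2*l*m/(2*t) := by
          apply div_le_div_of_nonneg_left (by positivity) (by positivity)
          rw [hu]; linarith
        have hdiv2 : 2*l*m/(2*t) = (m-r)/2 := by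
          rw [htdef]; field_simp
        have hrg : r < (shat - t)*1 - Lam (shat - t) l m := by
          rw [mul_one]; rw [hdiv2] at hdiv; linarith
        calc c < (r : EReal) := hcr
          _ < ((shat - t)*1 - Lam (shat - t) l m : ℝ) := EReal.coe_lt_coe_iff.mpr hrg
          _ ≤ _ := le_iSup (fun s : {s : ℝ // s ≤ shat} =>
                ((s.1 * 1 - Lam s.1 l m : ℝ) : EReal)) ⟨shat - t, hs⟩
    · -- 1 < z
      have hzW : z * Real.sqrt ((l+m-2*shat)^2-4*l*m) ≤ l+m-2*shat := by
        rw [hztil] at hz2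
        exact (le_div_iff₀ hW0).mp hz2
      obtain ⟨s0, hs0, hval⟩ := attain l m shat z hl hm h2E h1 hzW
      apply le_antisymm
      · exact iSup_le fun p => EReal.coe_le_coe_iff.mpr
          (key1 l m p.1 z hl hm hz1 (h2Es p.1 p.2))
      · exact le_iSup_of_le ⟨s0, hs0⟩ (le_of_eq (by rw [hval]))
  · -- Part 3
    intro z hzz
    have hzW : l+m-2*shat ≤ z * Real.sqrt ((l+m-2*shat)^2-4*l*m) := by
      rw [hztil] at hzz
      exact ((div_lt_iff₀ hW0).mp hzz).le
    apply le_antisymm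
    · exact iSup_le fun p => EReal.coe_le_coe_iff.mpr
        (key3 l m p.1 shat z hl hm p.2 h2E hzW)
    · exact le_iSup (fun s : {s : ℝ // s ≤ shat} =>
        ((s.1 * z - Lam s.1 l m : ℝ) : EReal)) ⟨shat, le_rfl⟩
  · -- Part 4
    intro z
    apply le_antisymm
    · exact iSup_le fun p => le_iSup_of_le ⟨p.1, p.2.le⟩ le_rfl
    · refine iSup_le fun p => ?_
      rcases lt_or_eq_of_le p.2 with h | h
      · exact le_iSup_of_le ⟨p.1, h⟩ le_rfl
      · apply le_of_forall_lt
        intro c hc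
        obtain ⟨r, hcr, hrg⟩ := EReal.exists_between_coe_real hc
        have hrg' : r < shat*z - Lam shat l m := by
          rw [h] at hrg
          exact EReal.coe_lt_coe_iff.mp hrg
        have hε0 : 0 < shat*z - Lam shat l m - r := by linarith
        have habs : 0 < |z| + 1 := by positivity
        set δ := (shat*z - Lam shat l m - r)/(2*(|z|+1)) with hδdef
        have hδ0 : 0 < δ := by positivity
        have hs' : shat - δ < shat := by linarith
        have hk4 := key4 l m (shat - δ) shat z hl hm (by linarith) h2E
        have hd : (shat - (shat - δ))*(|z|+1) = (shat*z - Lam shat l m - r)/2 := by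
          rw [hδdef]; field_simp; ring
        rw [hd] at hk4
        have hrg2 : r < (shat - δ)*z - Lam (shat - δ) l m := by linarith
        calc c < (r : EReal) := hcr
          _ < (((shat - δ)*z - Lam (shat - δ) l m : ℝ) : EReal) := EReal.coe_lt_coe_iff.mpr hrg2
          _ ≤ _ := le_iSup (fun s : {s : ℝ // s < shat} =>
                ((s.1 * z - Lam s.1 l m : ℝ) : EReal)) ⟨shat - δ, hs'⟩
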